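/- Let w and m be positive natural numbers with 1 ≤ m ≤ 2^w. For each k with 1 ≤ k ≤ m, the number of integers j with 0 ≤ j < 2^w and ⌊m·j/2^w⌋ = k − 1 equals ⌈k·2^w/m⌉ − ⌈(k−1)·2^w/m⌉. -/

import Mathlib

/-- exact preimage counts for the multiply-and-floor method.
For `1 ≤ m ≤ 2^w` and `1 ≤ k ≤ m`, the number of integers `j` with `0 ≤ j < 2^w` and
`⌊m·j/2^w⌋ = k − 1` equals `⌈k·2^w/m⌉ − ⌈(k−1)·2^w/m⌉`. -/
theorem floorMul_fiber_card (w m : ℕ) (hw : 0 < w) (hm1 : 1 ≤ m) (hm2 : m ≤ 2 ^ w) :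
    ∀ k : ℕ, 1 ≤ k → k ≤ m →
      ((((Finset.range (2 ^ w)).filter (fun j => m * j / 2 ^ w = k - 1)).card : ℤ)
        = ⌈((k : ℚ) * 2 ^ w) / m⌉ - ⌈(((k : ℚ) - 1) * 2 ^ w) / m⌉) := by
  intro k hk1 hk2
  have hm0 : (0:ℚ) < m := by exact_mod_cast hm1
  have hpw : 0 < 2 ^ w := Nat.pow_pos (by norm_num)
  set A : ℤ := ⌈(((k : ℚ) - 1) * 2 ^ w) / m⌉ with hA
  set B : ℤ := ⌈((k : ℚ) * 2 ^ w) / m⌉ with hB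
  have hk1' : (1:ℚ) ≤ (k:ℚ) := by exact_mod_cast hk1
  have hA0 : 0 ≤ A := Int.ceil_nonneg (by
    apply div_nonneg _ (le_of_lt hm0)
    have : (0:ℚ) ≤ (k:ℚ) - 1 := by linarith
    positivity)
  have hAB : A ≤ B := by
    apply Int.ceil_le_ceil
    gcongr <;> nlinarith [pow_pos (show (0:ℚ) < 2 by norm_num) w]
  have hB2 : B ≤ 2 ^ w := by
    rw [hB, Int.ceil_le]
    rw [div_le_iff₀ hm0]
    push_cast
    have hk2' : (k:ℚ) ≤ (m:ℚ) := by exact_mod_cast hk2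
    nlinarith [hpw, pow_pos (show (0:ℚ) < 2 by norm_num) w]
  have keyA : ∀ j : ℕ, (A ≤ (j:ℤ) ↔ (k - 1) * 2 ^ w ≤ m * j) := by
    intro j
    rw [hA, Int.ceil_le]
    push_cast
    rw [div_le_iff₀ hm0]
    rw [show ((k - 1 : ℕ) * 2 ^ w : ℕ) ≤ m * j ↔ (((k-1) * 2^w : ℕ):ℚ) ≤ ((m*j : ℕ):ℚ) from (Nat.cast_le).symm]
    push_cast [Nat.cast_sub hk1]
    constructor <;> intro h <;> nlinarith
  have keyB : ∀ j : ℕ, ((j:ℤ) < B ↔ m * j < k * 2 ^ w) := by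
    intro j
    rw [hB, Int.lt_ceil]
    push_cast
    rw [lt_div_iff₀ hm0]
    rw [show (m * j < k * 2 ^ w) ↔ ((m*j : ℕ):ℚ) < ((k * 2^w : ℕ):ℚ) from (Nat.cast_lt).symm]
    push_cast
    constructor <;> intro h <;> nlinarith
  have hset : (Finset.range (2 ^ w)).filter (fun j => m * j / 2 ^ w = k - 1)
      = Finset.Ico A.toNat B.toNat := by
    ext j
    simp only [Finset.mem_filter, Finset.mem_range, Finset.mem_Ico]
    constructor
    · rintro ⟨hj, hdiv⟩
      have h1 : (k - 1) * 2 ^ w ≤ m * j := by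
        exact (Nat.le_div_iff_mul_le hpw).mp hdiv.ge
      have h2 : m * j < k * 2 ^ w := by
        rw [← Nat.div_lt_iff_lt_mul hpw]
        omega
      refine ⟨Int.toNat_le.mpr ((keyA j).mpr h1), Int.lt_toNat.mpr ((keyB j).mpr h2)⟩
    · rintro ⟨h1, h2⟩
      have hA' : A ≤ (j:ℤ) := Int.toNat_le.mp h1
      have hB' : (j:ℤ) < B := Int.lt_toNat.mp h2
      have hj : j < 2 ^ w := by
        have : (j:ℤ) < 2 ^ w := lt_of_lt_of_le hB' hB2
        exact_mod_cast this
      have h1' := (keyA j).mp hA'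
      have h2' := (keyB j).mp hB'
      refine ⟨hj, ?_⟩
      have : (k - 1) ≤ m * j / 2 ^ w := (Nat.le_div_iff_mul_le hpw).mpr h1'
      have : m * j / 2 ^ w < k := (Nat.div_lt_iff_lt_mul hpw).mpr h2'
      omega
  rw [hset, Nat.card_Ico]
  omega
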